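/- Suppose V : ℝⁿ → ℝ is continuous, positive definite (V(x) ≥ 0 with equality iff x = 0), positively homogeneous of degree 2, and satisfies V(A_σ x) ≤ γ² V(x) for all x ∈ ℝⁿ and all σ ∈ {1,…,M}, where 0 ≤ γ < 1. Then the switching system x(t+1) = A_{σ(t)} x(t) is asymptotically stable under arbitrary switching: for every switching sequence and every initial condition, x(t) → 0 as t → ∞. -/

import Mathlib

theorem stmt12 {n M : ℕ} (A : Fin M → (Fin n → ℝ) →ₗ[ℝ] (Fin n → ℝ))
    (V : (Fin n → ℝ) → ℝ) (γ : ℝ)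
    (hVcont : Continuous V)
    (hVnonneg : ∀ x, 0 ≤ V x)
    (hVdef : ∀ x, V x = 0 ↔ x = 0)
    (hVhom : ∀ c : ℝ, 0 ≤ c → ∀ x, V (c • x) = c ^ 2 * V x)
    (hγ0 : 0 ≤ γ) (hγ1 : γ < 1)
    (hdec : ∀ (σ : Fin M) (x : Fin n → ℝ), V (A σ x) ≤ γ ^ 2 * V x) :
    ∀ (σ : ℕ → Fin M) (x : ℕ → (Fin n → ℝ)),
      (∀ t : ℕ, x (t + 1) = A (σ t) (x t)) →
      Filter.Tendsto (fun t => ‖x t‖) Filter.atTop (nhds 0) := by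
  intro σ x hx
  by_cases hn : n = 0
  · subst hn
    have hz : ∀ t, ‖x t‖ = 0 := by
      intro t
      have : x t = 0 := Subsingleton.elim _ _
      simp [this]
    simp only [hz]
    exact tendsto_const_nhds
  -- sphere is nonempty and compact; V attains a positive minimum m on it
  haveI : Nonempty (Fin n) := ⟨⟨0, Nat.pos_of_ne_zero hn⟩⟩
  haveI : Nontrivial (Fin n → ℝ) := inferInstance
  have hne : (Metric.sphere (0 : Fin n → ℝ) 1).Nonempty :=
    NormedSpace.sphere_nonempty.mpr (by norm_num)
  obtain ⟨u, hu, hmin⟩ :=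
    (isCompact_sphere (0 : Fin n → ℝ) 1).exists_isMinOn hne hVcont.continuousOn
  set m := V u with hm_def
  have hu0 : u ≠ 0 := by
    intro h
    have : ‖u‖ = 1 := mem_sphere_zero_iff_norm.mp hu
    simp [h] at this
  have hm : 0 < m := lt_of_le_of_ne (hVnonneg u) (fun h => hu0 ((hVdef u).mp h.symm))
  -- lower bound: m * ‖y‖^2 ≤ V y
  have hlow : ∀ y : Fin n → ℝ, m * ‖y‖ ^ 2 ≤ V y := by
    intro y
    rcases eq_or_ne y 0 with rfl | hy
    · simp [(hVdef 0).mpr rfl]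
    · have hny : 0 < ‖y‖ := norm_pos_iff.mpr hy
      have hunit : (‖y‖⁻¹ • y) ∈ Metric.sphere (0 : Fin n → ℝ) 1 := by
        rw [mem_sphere_zero_iff_norm, norm_smul]
        simp [abs_of_pos (inv_pos.mpr hny), inv_mul_cancel₀ hny.ne']
      have h1 : m ≤ V (‖y‖⁻¹ • y) := hmin hunit
      have h2 : V y = ‖y‖ ^ 2 * V (‖y‖⁻¹ • y) := by
        have := hVhom ‖y‖ (le_of_lt hny) (‖y‖⁻¹ • y)
        rw [smul_smul, mul_inv_cancel₀ hny.ne', one_smul] at this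
        linarith
      nlinarith
  -- decay of V along trajectories
  have key : ∀ t, V (x t) ≤ (γ ^ 2) ^ t * V (x 0) := by
    intro t
    induction t with
    | zero => simp
    | succ t ih =>
      have h1 : V (x (t + 1)) ≤ γ ^ 2 * V (x t) := by
        rw [hx t]; exact hdec (σ t) (x t)
      have h2 : γ ^ 2 * V (x t) ≤ γ ^ 2 * ((γ ^ 2) ^ t * V (x 0)) :=
        mul_le_mul_of_nonneg_left ih (by positivity)
      calc V (x (t + 1)) ≤ γ ^ 2 * ((γ ^ 2) ^ t * V (x 0)) := le_trans h1 h2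
        _ = (γ ^ 2) ^ (t + 1) * V (x 0) := by ring
  have hγ2 : γ ^ 2 < 1 := by nlinarith
  -- the upper bound tends to 0
  have hupper : Filter.Tendsto (fun t : ℕ => Real.sqrt ((γ ^ 2) ^ t * V (x 0) / m))
      Filter.atTop (nhds 0) := by
    have h0 : Filter.Tendsto (fun t : ℕ => (γ ^ 2) ^ t * V (x 0) / m)
        Filter.atTop (nhds 0) := by
      have := (tendsto_pow_atTop_nhds_zero_of_lt_one (by positivity) hγ2).mul_const
        (V (x 0))
      simpa using this.div_const m
    have := (Real.continuous_sqrt.tendsto 0).comp h0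
    rw [Real.sqrt_zero] at this
    exact this
  -- squeeze
  have hbound : ∀ t, ‖x t‖ ≤ Real.sqrt ((γ ^ 2) ^ t * V (x 0) / m) := by
    intro t
    have h1 : ‖x t‖ ^ 2 ≤ (γ ^ 2) ^ t * V (x 0) / m := by
      have := le_trans (hlow (x t)) (key t)
      rw [le_div_iff₀ hm]
      nlinarith
    calc ‖x t‖ = Real.sqrt (‖x t‖ ^ 2) := by
          rw [Real.sqrt_sq (norm_nonneg _)]
      _ ≤ Real.sqrt ((γ ^ 2) ^ t * V (x 0) / m) := Real.sqrt_le_sqrt h1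
  exact squeeze_zero (fun t => norm_nonneg _) hbound hupper
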